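/- arXiv:1710.10836 — 4 statements merged into one kernel-verified Lean document; each statement's English description precedes it below -/
import Mathlib

section
/- Suppose every cycle of a finite weighted directed graph G contains the edge e = (u,v). Let P be a maxflow path from v to u in G − e, and let C = P ∪ {e}. Then for every cycle C' of G, γ(C') ≤ max(γ(C), Value(e)); in particular if Value(e) ≥ M(P), the cycle C maximizes γ among all cycles of G. -/
/-- A directed multigraph: edges `E` with source and target vertices in `V`. -/
structure MultiDigraph (V : Type) (E : Type) where
  src : E → V
  tgt : E → V

namespace MultiDigraph

variable {V E : Type}

/-- `G.IsWalk v u l` : the list of edges `l` forms a directed walk from `v` to `u`. -/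
def IsWalk (G : MultiDigraph V E) : V → V → List E → Prop
  | v, u, [] => v = u
  | v, u, e :: l => G.src e = v ∧ G.IsWalk (G.tgt e) u l

/-- A (directed) cycle: a nonempty closed walk. -/
def IsCycle (G : MultiDigraph V E) (l : List E) : Prop :=
  l ≠ [] ∧ ∃ x, G.IsWalk x x l

/-- minimum edge weight (critical edge value γ) along a nonempty list of edges. -/
noncomputable def minW (w : E → ℝ) (l : List E) : ℝ := ((l.map w).min?).getD 0

/-- maximum edge weight M along a nonempty list of edges. -/
noncomputable def maxW (w : E → ℝ) (l : List E) : ℝ := ((l.map w).max?).getD 0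

/-- flow value φ = M − γ. -/
noncomputable def flowVal (w : E → ℝ) (l : List E) : ℝ := maxW w l - minW w l

end MultiDigraph


namespace MultiDigraphAux
variable {E : Type} (w : E → ℝ)

theorem min?_spec {l : List E} (h : l ≠ []) :
    ∃ m, (l.map w).min? = some m ∧ m ∈ l.map w ∧ ∀ b ∈ l.map w, m ≤ b := by
  cases hm : (l.map w).min? with
  | none => exact absurd (List.min?_eq_none_iff.mp hm) (by simpa using h)
  | some m =>
    have : Std.Antisymm fun (a b : ℝ) => a ≤ b := ⟨fun _ _ h1 h2 => le_antisymm h1 h2⟩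
    have := List.min?_eq_some_iff.mp hm
    exact ⟨m, rfl, this.1, this.2⟩

theorem minW_le_of_mem {l : List E} {f : E} (hf : f ∈ l) :
    ((l.map w).min?).getD 0 ≤ w f := by
  obtain ⟨m, hm, _, hle⟩ := min?_spec w (List.ne_nil_of_mem hf)
  rw [hm]; exact hle _ (List.mem_map_of_mem hf)

theorem minW_mem {l : List E} (h : l ≠ []) :
    ∃ f ∈ l, ((l.map w).min?).getD 0 = w f := by
  obtain ⟨m, hm, hmem, _⟩ := min?_spec w h
  obtain ⟨f, hf, rfl⟩ := List.mem_map.mp hmem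
  exact ⟨f, hf, by rw [hm]; rfl⟩

theorem le_maxW_of_mem {l : List E} {f : E} (hf : f ∈ l) :
    w f ≤ ((l.map w).max?).getD 0 := by
  cases hm : (l.map w).max? with
  | none => exact absurd (List.max?_eq_none_iff.mp hm) (by simp [List.ne_nil_of_mem hf])
  | some m =>
    have : Std.Antisymm fun (a b : ℝ) => a ≤ b := ⟨fun _ _ h1 h2 => le_antisymm h1 h2⟩
    have := List.max?_eq_some_iff.mp hm
    exact this.2 _ (List.mem_map_of_mem hf)

variable {V : Type} (G : MultiDigraph V E)

theorem walk_append : ∀ {l l' : List E} {a b c : V},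
    G.IsWalk a b l → G.IsWalk b c l' → G.IsWalk a c (l ++ l')
  | [], l', a, b, c, h, h' => by cases h; exact h'
  | f :: t, l', a, b, c, h, h' =>
    ⟨h.1, walk_append h.2 h'⟩

theorem split_first {e : E} : ∀ {l : List E} {a b : V},
    G.IsWalk a b l → e ∈ l → ∃ l₁ l₂, l = l₁ ++ e :: l₂ ∧ e ∉ l₁ ∧
      G.IsWalk a (G.src e) l₁ ∧ G.IsWalk (G.tgt e) b l₂
  | [], a, b, _, he => absurd he List.not_mem_nil
  | f :: t, a, b, h, he => by
    by_cases hfe : f = e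
    · subst hfe
      exact ⟨[], t, rfl, List.not_mem_nil, h.1.symm, h.2⟩
    · have het : e ∈ t := by
        rcases List.mem_cons.mp he with h1 | h1
        · exact absurd h1.symm hfe
        · exact h1
      obtain ⟨l₁, l₂, hl, hnl, hw1, hw2⟩ := split_first h.2 het
      exact ⟨f :: l₁, l₂, by simp [hl], by
        simp only [List.mem_cons, not_or]
        exact ⟨fun hc => hfe hc.symm, hnl⟩, ⟨h.1, hw1⟩, hw2⟩

/-- From a cycle through `e = (u,v)`, extract a nonempty `v→u` walk avoiding `e`,
or conclude `u = v`. -/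
theorem extract {e : E} {u v : V} (hsrc : G.src e = u) (htgt : G.tgt e = v)
    {l : List E} {x : V} (hw : G.IsWalk x x l) (he : e ∈ l) :
    (∃ Q, Q ≠ [] ∧ G.IsWalk v u Q ∧ e ∉ Q ∧ ∀ f ∈ Q, f ∈ l) ∨ u = v := by
  obtain ⟨l₁, l₂, hl, hnl₁, hw1, hw2⟩ := split_first G hw he
  rw [hsrc] at hw1; rw [htgt] at hw2
  by_cases hel2 : e ∈ l₂
  · obtain ⟨a, b, hab, hna, hwa, _⟩ := split_first G hw2 hel2
    rw [hsrc] at hwa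
    rcases eq_or_ne a [] with rfl | hane
    · right; exact hwa.symm
    · refine Or.inl ⟨a, hane, hwa, hna, fun f hf => ?_⟩
      rw [hl, hab]; simp [hf]
  · rcases eq_or_ne (l₂ ++ l₁) [] with hnil | hne
    · right
      rcases List.append_eq_nil_iff.mp hnil with ⟨rfl, rfl⟩
      cases hw1; cases hw2; rfl
    · refine Or.inl ⟨l₂ ++ l₁, hne, walk_append G hw2 hw1, ?_, fun f hf => ?_⟩
      · simp only [List.mem_append, not_or]; exact ⟨hel2, hnl₁⟩
      · rw [hl]; rcases List.mem_append.mp hf with h1 | h1 <;> simp [h1]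

end MultiDigraphAux

open MultiDigraph in
/-- Every cycle of G contains e = (u,v). If P is a maxflow path from v to u in
G − e and C = P ∪ {e}, then every cycle C' satisfies γ(C') ≤ max(γ(C), w e);
in particular if w e ≥ M(P) then C maximizes γ among all cycles of G. -/
theorem stmt_7 {V E : Type} (G : MultiDigraph V E) (w : E → ℝ) (e : E) (u v : V)
    (hsrc : G.src e = u) (htgt : G.tgt e = v)
    (hall : ∀ l, G.IsCycle l → e ∈ l)
    (P : List E) (hP : G.IsWalk v u P) (hPne : P ≠ []) (heP : e ∉ P)
    (hmaxflow : ∀ Q, G.IsWalk v u Q → Q ≠ [] → e ∉ Q → minW w Q ≤ minW w P) :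
    (∀ C', G.IsCycle C' → minW w C' ≤ max (minW w (P ++ [e])) (w e)) ∧
    (maxW w P ≤ w e → ∀ C', G.IsCycle C' → minW w C' ≤ minW w (P ++ [e])) := by
  classical
  have key : ∀ C', G.IsCycle C' → (minW w C' ≤ w e) ∧ (u = v ∨ minW w C' ≤ minW w P) := by
    intro C' hC'
    have heC := hall C' hC'
    obtain ⟨hne, x, hw⟩ := hC'
    refine ⟨MultiDigraphAux.minW_le_of_mem w heC, ?_⟩
    rcases MultiDigraphAux.extract G hsrc htgt hw heC with ⟨Q, hQne, hQw, hQe, hQsub⟩ | huv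
    · right
      have h1 : minW w C' ≤ minW w Q := by
        obtain ⟨f, hf, hfeq⟩ := MultiDigraphAux.minW_mem w hQne
        have hq : minW w Q = w f := hfeq
        rw [hq]
        exact MultiDigraphAux.minW_le_of_mem w (hQsub f hf)
      exact h1.trans (hmaxflow Q hQw hQne hQe)
    · exact Or.inl huv
  have hPnotcycle : u ≠ v := by
    intro huv
    subst huv
    exact heP (hall P ⟨hPne, u, hP⟩)
  constructor
  · intro C' hC'
    exact ((key C' hC').1).trans (le_max_right _ _)
  · intro hMe C' hC'
    have h2 := (key C' hC').2.resolve_left hPnotcycle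
    refine h2.trans ?_
    obtain ⟨f, hf, hfeq⟩ := MultiDigraphAux.minW_mem w (by simp : P ++ [e] ≠ [])
    have hq : minW w (P ++ [e]) = w f := hfeq
    rw [hq]
    rcases List.mem_append.mp hf with h1 | h1
    · exact MultiDigraphAux.minW_le_of_mem w h1
    · have hfe : f = e := by simpa using h1
      subst hfe
      obtain ⟨g, hg⟩ := List.exists_mem_of_ne_nil P hPne
      calc minW w P ≤ w g := MultiDigraphAux.minW_le_of_mem w hg
        _ ≤ maxW w P := MultiDigraphAux.le_maxW_of_mem w hg
        _ ≤ w f := hMe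
end

section
/- In the widest-path (max-min) variant of Dijkstra's algorithm with source v, after all vertices are extracted from the priority queue, for every vertex m reachable from v, dist[m] equals the maximum over all v-m paths of the minimum edge weight along the path (with dist[v] = +∞). -/
noncomputable section

/-- One extraction step of widest-path Dijkstra: after extracting `ver`,
every vertex `n` is relaxed via `dist[n] := max (dist n) (min (dist ver) (w ver n))`,
where `w x y` is the largest weight among parallel edges from `x` to `y`
(`⊥` if there is no such edge). -/
def relaxAll {V : Type} (w : V → V → EReal) (d : V → EReal) (ver : V) : V → EReal :=
  fun n => max (d n) (min (d ver) (w ver n))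

/-- Minimum edge weight along the path `x :: l` of vertices (`⊤` for the empty path). -/
def pathMin {V : Type} (w : V → V → EReal) : V → List V → EReal
  | _, [] => ⊤
  | x, y :: l => min (w x y) (pathMin w y l)

/-- Last vertex of the path `v :: l`. -/
def endV {V : Type} (v : V) (l : List V) : V := (v :: l).getLast (List.cons_ne_nil _ _)

/-- Widest-path distance: the maximum (supremum) over all v-m paths of the
minimum edge weight along the path (equals `⊤` for `m = v`). -/
def widest {V : Type} (w : V → V → EReal) (v m : V) : EReal :=
  ⨆ (l : List V) (_ : endV v l = m), pathMin w v l

/-- `dists w d0 L i` : the dist table after the first `i` extractions,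
where `L` is the order in which vertices are extracted. -/
def dists {V : Type} (w : V → V → EReal) (d0 : V → EReal) (L : List V) (i : ℕ) : V → EReal :=
  (L.take i).foldl (relaxAll w) d0

/-- The priority-queue (greedy) property of a run: the `i`-th extracted vertex has
maximal current dist value among all still-unextracted vertices. -/
def GreedyRun {V : Type} (w : V → V → EReal) (d0 : V → EReal) (L : List V) : Prop :=
  ∀ i j : Fin L.length, i ≤ j →
    dists w d0 L i (L.get j) ≤ dists w d0 L i (L.get i)

namespace Stmt9Aux

variable {V : Type}

lemma getD_congr (l : List V) (n : ℕ) (h : n < l.length) (d d' : V) :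
    l.getD n d = l.getD n d' := by
  simp [List.getD_eq_getElem?_getD, List.getElem?_eq_getElem h]

lemma endV_cons (x y : V) (l : List V) : endV x (y :: l) = endV y l := by
  simp [endV, List.getLast_cons]

lemma endV_append_single (x n : V) (l : List V) : endV x (l ++ [n]) = n := by
  simpa [endV] using List.getLast_append (l := x :: l ++ [n])

lemma pathMin_append (w : V → V → EReal) (n : V) :
    ∀ (l : List V) (x : V), pathMin w x (l ++ [n]) = min (pathMin w x l) (w (endV x l) n)
  | [], x => by simp [pathMin, endV]
  | y :: l, x => by
    rw [List.cons_append]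
    show min (w x y) (pathMin w y (l ++ [n])) =
      min (min (w x y) (pathMin w y l)) (w (endV x (y :: l)) n)
    rw [pathMin_append w n l y, endV_cons, min_assoc]

lemma pathMin_take_le (w : V → V → EReal) :
    ∀ (l : List V) (x : V) (s : ℕ), pathMin w x l ≤ pathMin w x (l.take s)
  | [], x, s => by simp
  | y :: l, x, 0 => by simp [pathMin]
  | y :: l, x, s + 1 => by
    simp only [List.take_succ_cons, pathMin]
    exact min_le_min le_rfl (pathMin_take_le w l y s)

lemma pathMin_le_edge (w : V → V → EReal) :
    ∀ (l : List V) (x : V) (s : ℕ), s + 1 ≤ l.length →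
      pathMin w x l ≤ w ((x :: l).getD s x) ((x :: l).getD (s + 1) x)
  | [], x, s, h => by simp at h
  | y :: l, x, 0, h => by
    show pathMin w x (y :: l) ≤ w ((x :: y :: l).getD 0 x) ((x :: y :: l).getD 1 x)
    rw [List.getD_cons_zero, List.getD_cons_succ, List.getD_cons_zero]
    exact min_le_left _ _
  | y :: l, x, s + 1, h => by
    simp only [List.length_cons, add_le_add_iff_right] at h
    have h1 : s + 1 < (y :: l).length := by simp only [List.length_cons]; omega
    have h0 : s < (y :: l).length := by simp only [List.length_cons]; omega
    calc pathMin w x (y :: l) ≤ pathMin w y l := min_le_right _ _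
      _ ≤ w ((y :: l).getD s y) ((y :: l).getD (s + 1) y) := pathMin_le_edge w l y s h
      _ = w ((x :: y :: l).getD (s + 1) x) ((x :: y :: l).getD (s + 1 + 1) x) := by
        rw [show (x :: y :: l).getD (s + 1) x = (y :: l).getD s x from List.getD_cons_succ,
          show (x :: y :: l).getD (s + 1 + 1) x = (y :: l).getD (s + 1) x from
            List.getD_cons_succ,
          getD_congr _ _ h0 x y, getD_congr _ _ h1 x y]

lemma endV_take :
    ∀ (l : List V) (x : V) (s : ℕ), s ≤ l.length → endV x (l.take s) = (x :: l).getD s x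
  | [], x, s, h => by
    have : s = 0 := Nat.le_zero.mp h
    subst this
    simp [endV]
  | y :: l, x, 0, h => by simp [endV]
  | y :: l, x, s + 1, h => by
    simp only [List.length_cons, add_le_add_iff_right] at h
    rw [List.take_succ_cons, endV_cons, endV_take l y s h, List.getD_cons_succ]
    exact getD_congr _ _ (by simp only [List.length_cons]; omega) y x

section Run

variable (w : V → V → EReal) (d0 : V → EReal) (L : List V)

lemma dists_zero : dists w d0 L 0 = d0 := rfl

lemma dists_succ {i : ℕ} (hi : i < L.length) :
    dists w d0 L (i + 1) = relaxAll w (dists w d0 L i) (L.get ⟨i, hi⟩) := by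
  simp only [dists, List.take_succ, List.getElem?_eq_getElem hi, Option.toList_some,
    List.foldl_append, List.foldl_cons, List.foldl_nil, List.get_eq_getElem]

lemma dists_stop {i : ℕ} (hi : L.length ≤ i) :
    dists w d0 L i = dists w d0 L L.length := by
  unfold dists
  rw [List.take_of_length_le hi, List.take_of_length_le le_rfl]

lemma dists_step_le (i : ℕ) (n : V) : dists w d0 L i n ≤ dists w d0 L (i + 1) n := by
  rcases lt_or_ge i L.length with h | h
  · rw [dists_succ w d0 L h]
    exact le_max_left _ _
  · rw [dists_stop w d0 L h, dists_stop w d0 L (le_trans h (Nat.le_succ i))]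

lemma dists_mono {i j : ℕ} (hij : i ≤ j) (n : V) : dists w d0 L i n ≤ dists w d0 L j n := by
  induction j with
  | zero => simp_all
  | succ j ih =>
    rcases Nat.lt_or_ge i (j + 1) with h | h
    · exact le_trans (ih (by omega)) (dists_step_le w d0 L j n)
    · have : i = j + 1 := by omega
      subst this; exact le_rfl

variable (hg : GreedyRun w d0 L)
include hg

lemma greedy' {i j : ℕ} (hi : i < L.length) (hj : j < L.length) (hij : i ≤ j) :
    dists w d0 L i (L.get ⟨j, hj⟩) ≤ dists w d0 L i (L.get ⟨i, hi⟩) :=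
  hg ⟨i, hi⟩ ⟨j, hj⟩ hij

lemma val_anti : ∀ {j k : ℕ} (hjk : j ≤ k) (hk : k < L.length),
    dists w d0 L k (L.get ⟨k, hk⟩) ≤ dists w d0 L j (L.get ⟨j, lt_of_le_of_lt hjk hk⟩) := by
  intro j k
  induction k with
  | zero => intro hjk hk; interval_cases j; exact le_rfl
  | succ k ih =>
    intro hjk hk
    rcases Nat.lt_or_ge j (k + 1) with h | h
    · have hk' : k < L.length := by omega
      have step : dists w d0 L (k + 1) (L.get ⟨k + 1, hk⟩) ≤ dists w d0 L k (L.get ⟨k, hk'⟩) := by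
        rw [dists_succ w d0 L hk']
        exact max_le (greedy' w d0 L hg hk' hk (by omega)) (min_le_left _ _)
      exact le_trans step (ih (by omega) hk')
    · have : j = k + 1 := by omega
      subst this; exact le_rfl

lemma dists_stable {j : ℕ} (hj : j < L.length) :
    ∀ i, j ≤ i → dists w d0 L i (L.get ⟨j, hj⟩) = dists w d0 L j (L.get ⟨j, hj⟩) := by
  intro i
  induction i with
  | zero => intro h; interval_cases j; rfl
  | succ i ih =>
    intro h
    rcases Nat.lt_or_ge j (i + 1) with h' | h'
    · have hji : j ≤ i := by omega
      rcases Nat.lt_or_ge i L.length with hi | hi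
      · rw [dists_succ w d0 L hi, relaxAll]
        have h1 : dists w d0 L i (L.get ⟨j, hj⟩) = dists w d0 L j (L.get ⟨j, hj⟩) := ih hji
        have h2 : min (dists w d0 L i (L.get ⟨i, hi⟩)) (w (L.get ⟨i, hi⟩) (L.get ⟨j, hj⟩)) ≤
            dists w d0 L j (L.get ⟨j, hj⟩) :=
          le_trans (min_le_left _ _) (val_anti w d0 L hg hji hi)
        simp only [h1]
        exact max_eq_left h2
      · rw [dists_stop w d0 L (le_trans hi (Nat.le_succ i)),
          ← dists_stop w d0 L hi]
        exact ih hji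
    · have : j = i + 1 := by omega
      subst this; rfl

end Run

section Widest

variable [DecidableEq V] (w : V → V → EReal) (v : V)

lemma le_widest {m : V} (l : List V) (h : endV v l = m) : pathMin w v l ≤ widest w v m :=
  le_iSup₂ (f := fun (l : List V) (_ : endV v l = m) => pathMin w v l) l h

lemma widest_self_top : widest w v v = ⊤ :=
  top_le_iff.mp (le_widest w v ([] : List V) rfl)

lemma min_widest_le (x n : V) : min (widest w v x) (w x n) ≤ widest w v n := by
  have key : widest w v x ⊓ w x n =
      ⨆ (l : List V) (_ : endV v l = x), (pathMin w v l ⊓ w x n) := by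
    rw [widest, iSup_inf_eq]
    exact iSup_congr fun l => iSup_inf_eq _ _
  rw [key]
  refine iSup₂_le fun l h => ?_
  have : pathMin w v l ⊓ w x n = pathMin w v (l ++ [n]) := by
    rw [pathMin_append, h]
  rw [this]
  exact le_widest w v _ (endV_append_single v n l)

lemma dists_le_widest (L : List V) (d0 : V → EReal)
    (hd0 : d0 = fun x => if x = v then ⊤ else ⊥) :
    ∀ (i : ℕ) (n : V), dists w d0 L i n ≤ widest w v n := by
  intro i
  induction i with
  | zero =>
    intro n
    rw [dists_zero, hd0]
    by_cases h : n = v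
    · subst h; simp [widest_self_top]
    · simp [h]
  | succ i ih =>
    intro n
    rcases Nat.lt_or_ge i L.length with hi | hi
    · rw [dists_succ w d0 L hi, relaxAll]
      refine max_le (ih n) ?_
      exact le_trans (min_le_min (ih _) le_rfl) (min_widest_le w v _ n)
    · rw [dists_stop w d0 L (le_trans hi (Nat.le_succ i)), ← dists_stop w d0 L hi]
      exact ih n

end Widest

end Stmt9Aux

open Stmt9Aux in
/-- after all vertices are extracted, for every vertex `m` reachable
from the source `v`, `dist[m]` equals the maximum over all v-m paths of the
minimum edge weight along the path (with `dist[v] = +∞`). -/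
theorem stmt_9 {V : Type} [Fintype V] [DecidableEq V]
    (w : V → V → EReal) (v : V) (L : List V)
    (hnodup : L.Nodup) (hall : ∀ x : V, x ∈ L)
    (d0 : V → EReal) (hd0 : d0 = fun x => if x = v then ⊤ else ⊥)
    (hgreedy : GreedyRun w d0 L) :
    ∀ m : V, (∃ l : List V, endV v l = m ∧ pathMin w v l ≠ ⊥) →
      dists w d0 L L.length m = widest w v m := by
  -- index of a vertex in L
  have hidx_lt : ∀ x : V, L.idxOf x < L.length := fun x =>
    List.idxOf_lt_length_iff.2 (hall x)
  have hget_idx : ∀ x : V, L.get ⟨L.idxOf x, hidx_lt x⟩ = x := fun x =>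
    List.idxOf_get (hidx_lt x)
  have hidx_get : ∀ (j : ℕ) (hj : j < L.length), L.idxOf (L.get ⟨j, hj⟩) = j := by
    intro j hj
    exact List.get_idxOf hnodup ⟨j, hj⟩
  have hlen0 : 0 < L.length := lt_of_le_of_lt (Nat.zero_le _) (hidx_lt v)
  -- the source is extracted first
  have hL0 : L.get ⟨0, hlen0⟩ = v := by
    have h1 : dists w d0 L 0 v ≤ dists w d0 L 0 (L.get ⟨0, hlen0⟩) := by
      have := hgreedy ⟨0, hlen0⟩ ⟨L.idxOf v, hidx_lt v⟩ (Fin.mk_le_mk.2 (Nat.zero_le _))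
      rwa [hget_idx v] at this
    rw [dists_zero, hd0] at h1
    simp only [if_pos rfl] at h1
    by_contra hne
    rw [if_neg hne] at h1
    exact absurd (top_le_iff.mp h1) (by simp)
  -- the key lower bound at extraction time
  have extract_ge : ∀ i (hi : i < L.length) (l : List V), endV v l = L.get ⟨i, hi⟩ →
      pathMin w v l ≤ dists w d0 L i (L.get ⟨i, hi⟩) := by
    intro i
    induction i using Nat.strong_induction_on with
    | _ i IH =>
      intro hi l hl
      set p := pathMin w v l with hp
      set nth : ℕ → V := fun t => (v :: l).getD t v with hnth
      -- the last vertex of the path has index i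
      have hlast : L.idxOf (nth l.length) = i := by
        have : nth l.length = endV v l := by
          rw [hnth]
          have := endV_take l v l.length le_rfl
          simpa using this.symm
        rw [this, hl, hidx_get i hi]
      rcases Nat.eq_zero_or_pos i with hi0 | hipos
      · -- i = 0 : the extracted vertex has dist ⊤
        subst hi0
        have h1 : dists w d0 L 0 v ≤ dists w d0 L 0 (L.get ⟨0, hi⟩) := by
          have := hgreedy ⟨0, hi⟩ ⟨L.idxOf v, hidx_lt v⟩ (Fin.mk_le_mk.2 (Nat.zero_le _))
          rwa [hget_idx v] at this
        rw [dists_zero, hd0] at h1 ⊢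
        simp only [if_pos rfl] at h1
        exact le_trans le_top (by simpa using h1)
      · -- i ≥ 1 : find the first path vertex not yet extracted
        have hPex : ∃ t, i ≤ L.idxOf (nth t) := ⟨l.length, by rw [hlast]⟩
        set t := Nat.find hPex with hht
        have htspec : i ≤ L.idxOf (nth t) := Nat.find_spec hPex
        have htle : t ≤ l.length := Nat.find_le (by rw [hlast])
        have ht0 : 0 < t := by
          rcases Nat.eq_zero_or_pos t with h0 | h0
          · exfalso
            have : nth 0 = v := by simp [hnth]
            rw [h0, this] at htspec
            have : L.idxOf v = 0 := by
              have := hidx_get 0 hlen0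
              rwa [hL0] at this
            omega
          · exact h0
        set s := t - 1 with hs
        have hst : s + 1 = t := by omega
        have hs_lt : s + 1 ≤ l.length := by omega
        have hsP : L.idxOf (nth s) < i := by
          have := Nat.find_min hPex (m := s) (by omega)
          omega
        set j' := L.idxOf (nth s) with hj'
        have hj'len : j' < L.length := hidx_lt _
        have hLj' : L.get ⟨j', hj'len⟩ = nth s := hget_idx _
        -- prefix path reaches nth s
        have hpre : endV v (l.take s) = nth s := endV_take l v s (by omega)
        have hIH : pathMin w v (l.take s) ≤ dists w d0 L j' (L.get ⟨j', hj'len⟩) := by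
          apply IH j' hsP hj'len
          rw [hLj', hpre]
        have hp_pre : p ≤ pathMin w v (l.take s) := pathMin_take_le w l v s
        have hedge : p ≤ w (nth s) (nth (s + 1)) := pathMin_le_edge w l v s hs_lt
        -- relaxation at step j' pushes p to nth (s+1)
        rw [hLj'] at hIH
        have hstep : p ≤ dists w d0 L (j' + 1) (nth (s + 1)) := by
          rw [dists_succ w d0 L hj'len, relaxAll, hLj']
          exact le_trans (le_min (le_trans hp_pre hIH) hedge) (le_max_right _ _)
        have hmono : dists w d0 L (j' + 1) (nth (s + 1)) ≤ dists w d0 L i (nth (s + 1)) :=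
          dists_mono w d0 L (by omega) _
        -- greedy comparison at step i
        have hj'' : i ≤ L.idxOf (nth (s + 1)) := by rw [hst]; exact htspec
        have hgr : dists w d0 L i (nth (s + 1)) ≤ dists w d0 L i (L.get ⟨i, hi⟩) := by
          have := hgreedy ⟨i, hi⟩ ⟨L.idxOf (nth (s + 1)), hidx_lt _⟩ (Fin.mk_le_mk.2 hj'')
          rwa [hget_idx (nth (s + 1))] at this
        exact le_trans hstep (le_trans hmono hgr)
  -- conclude
  intro m _
  set j := L.idxOf m with hj
  have hjlen : j < L.length := hidx_lt m
  have hLj : L.get ⟨j, hjlen⟩ = m := hget_idx m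
  have hstable : dists w d0 L L.length m = dists w d0 L j (L.get ⟨j, hjlen⟩) := by
    rw [← hLj]
    exact dists_stable w d0 L hgreedy hjlen L.length (le_of_lt hjlen)
  apply le_antisymm
  · exact dists_le_widest w v L d0 hd0 L.length m
  · rw [widest, hstable]
    refine iSup₂_le fun l h => ?_
    exact extract_ge j hjlen l (by rw [hLj, h])
end
end

section
/- In the widest-path Dijkstra algorithm, when a vertex x is extracted from the priority queue, its dist value never changes afterwards, and vertices are extracted in non-increasing order of their final dist values. -/
noncomputable section

lemma dists_succ' {V : Type} (w : V → V → EReal) (d0 : V → EReal) (L : List V)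
    (k : ℕ) (hk : k < L.length) :
    dists w d0 L (k+1) = relaxAll w (dists w d0 L k) (L.get ⟨k, hk⟩) := by
  unfold dists
  rw [List.take_succ, List.foldl_append]
  simp [List.getElem?_eq_getElem hk]

lemma key_lemma {V : Type} (w : V → V → EReal) (d0 : V → EReal) (L : List V)
    (hgreedy : GreedyRun w d0 L) (i : Fin L.length) :
    ∀ k : ℕ, i.1 ≤ k →
      dists w d0 L k (L.get i) = dists w d0 L i (L.get i) ∧
      ∀ j : Fin L.length, k ≤ j.1 →
        dists w d0 L k (L.get j) ≤ dists w d0 L i (L.get i) := by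
  intro k
  induction k with
  | zero =>
    intro h
    have hi0 : i.1 = 0 := Nat.le_zero.mp h
    constructor
    · rw [hi0]
    · intro j hj
      have := hgreedy i j (by omega)
      rw [hi0] at this ⊢
      exact this
  | succ k ih =>
    intro h
    rcases Nat.lt_or_ge k L.length with hk | hk
    · -- a real step happens
      rcases Nat.eq_or_lt_of_le h with heq | hlt
      · -- i.1 = k+1 : base-like case
        constructor
        · rw [← heq]
        · intro j hj
          have := hgreedy i j (by omega)
          rw [← heq]
          exact this
      · have hik : i.1 ≤ k := by omega
        obtain ⟨ih1, ih2⟩ := ih hik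
        have hs := dists_succ' w d0 L k hk
        have hkk : dists w d0 L k (L.get ⟨k, hk⟩) ≤ dists w d0 L i (L.get i) :=
          ih2 ⟨k, hk⟩ le_rfl
        constructor
        · rw [hs]
          unfold relaxAll
          rw [ih1]
          refine max_eq_left ?_
          exact le_trans (min_le_left _ _) hkk
        · intro j hj
          rw [hs]
          unfold relaxAll
          refine max_le (ih2 j (by omega)) (le_trans (min_le_left _ _) hkk)
    · -- k ≥ L.length : dists saturates
      have hsat : dists w d0 L (k+1) = dists w d0 L k := by
        unfold dists
        rw [List.take_of_length_le (by omega), List.take_of_length_le (by omega)]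
      obtain ⟨ih1, ih2⟩ := ih (by omega)
      constructor
      · rw [hsat]; exact ih1
      · intro j hj
        exact absurd j.isLt (by omega)
      

/-- in widest-path Dijkstra, once a vertex is extracted its dist
value never changes afterwards, and vertices are extracted in non-increasing
order of their final dist values. -/
theorem stmt_10 {V : Type} [Fintype V] [DecidableEq V]
    (w : V → V → EReal) (v : V) (L : List V)
    (hnodup : L.Nodup) (hall : ∀ x : V, x ∈ L)
    (d0 : V → EReal) (hd0 : d0 = fun x => if x = v then ⊤ else ⊥)
    (hgreedy : GreedyRun w d0 L) :
    (∀ i j : Fin L.length, i ≤ j →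
        dists w d0 L j (L.get i) = dists w d0 L i (L.get i)) ∧
    (∀ i j : Fin L.length, i ≤ j →
        dists w d0 L L.length (L.get j) ≤ dists w d0 L L.length (L.get i)) := by
  constructor
  · intro i j hij
    exact (key_lemma w d0 L hgreedy i j.1 hij).1
  · intro i j hij
    have hMj : dists w d0 L L.length (L.get j) = dists w d0 L j (L.get j) :=
      (key_lemma w d0 L hgreedy j L.length (le_of_lt j.isLt)).1
    have hMi : dists w d0 L L.length (L.get i) = dists w d0 L i (L.get i) :=
      (key_lemma w d0 L hgreedy i L.length (le_of_lt i.isLt)).1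
    have : dists w d0 L j.1 (L.get j) ≤ dists w d0 L i (L.get i) :=
      (key_lemma w d0 L hgreedy i j.1 hij).2 j le_rfl
    rw [hMi, hMj]
    exact this
end
end

section
/- In the iterative cycle-enumeration process (find maxflow path P from v to u, record P ∪ {e}, delete all edges of weight ≥ M(P)), the recorded set S of cycles contains a cycle with minimum flow value among all cycles of the original graph G through e. Consequently, choosing the member of S with smallest flow value yields a cycle C through e minimizing φ(C) = M(C) − γ(C) over all cycles of G. -/
namespace MultiDigraph

variable {V E : Type}

/-- The edges of `l` all lie in the edge set `F`. -/
def EdgesIn (l : List E) (F : Finset E) : Prop := ∀ f ∈ l, f ∈ F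

/-- `P` is a maxflow path from `v` to `u` using only edges of `F`. -/
def IsMaxflowPathIn (G : MultiDigraph V E) (w : E → ℝ) (v u : V) (F : Finset E)
    (P : List E) : Prop :=
  G.IsWalk v u P ∧ P ≠ [] ∧ EdgesIn P F ∧
    ∀ Q, G.IsWalk v u Q → Q ≠ [] → EdgesIn Q F → minW w Q ≤ minW w P

/-- `ProcessRun G w e u v k Es Ps`: the iterative process of Algorithm 2.
Starting from the whole graph (`Es 0 = univ`), at each step `i < k` the list
`Ps i` is a maxflow path from `v` to `u` in the current edge set `Es i`, the
cycle `Ps i ++ [e]` is recorded, and every edge other than `e` of weight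
`≥ M(Ps i)` is deleted to form `Es (i+1)`. -/
def ProcessRun [Fintype E] (G : MultiDigraph V E) (w : E → ℝ) (e : E) (u v : V)
    (k : ℕ) (Es : ℕ → Finset E) (Ps : ℕ → List E) : Prop :=
  Es 0 = Finset.univ ∧
  ∀ i < k,
    G.IsMaxflowPathIn w v u (Es i) (Ps i) ∧
    ((Es (i+1) : Set E) = {f ∈ (Es i : Set E) | ¬ (maxW w (Ps i) ≤ w f ∧ f ≠ e)})

/-- There is a cycle all of whose edges lie in `F`. -/
def HasCycleIn (G : MultiDigraph V E) (F : Finset E) : Prop :=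
  ∃ C, G.IsCycle C ∧ EdgesIn C F

end MultiDigraph

namespace MultiDigraph

variable {V E : Type}

lemma maxW_spec (w : E → ℝ) {l : List E} (h : l ≠ []) :
    (∃ f ∈ l, maxW w l = w f) ∧ ∀ f ∈ l, w f ≤ maxW w l := by
  have hm : l.map w ≠ [] := by simpa using h
  obtain ⟨a, ha⟩ : ∃ a, (l.map w).max? = some a := by
    cases hh : (l.map w).max? with
    | none => exact absurd (List.max?_eq_none_iff.1 hh) hm
    | some a => exact ⟨a, rfl⟩
  have hval : maxW w l = a := by simp [maxW, ha]
  have hmem : a ∈ l.map w := List.max?_mem ha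
  obtain ⟨f, hf, hfa⟩ := List.mem_map.1 hmem
  have hle : ∀ b ∈ l.map w, b ≤ a :=
    (List.max?_le_iff ha).1 le_rfl
  refine ⟨⟨f, hf, by rw [hval, hfa]⟩, fun g hg => ?_⟩
  rw [hval]
  exact hle _ (List.mem_map.2 ⟨g, hg, rfl⟩)

lemma minW_spec (w : E → ℝ) {l : List E} (h : l ≠ []) :
    (∃ f ∈ l, minW w l = w f) ∧ ∀ f ∈ l, minW w l ≤ w f := by
  have hm : l.map w ≠ [] := by simpa using h
  obtain ⟨a, ha⟩ : ∃ a, (l.map w).min? = some a := by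
    cases hh : (l.map w).min? with
    | none => exact absurd (List.min?_eq_none_iff.1 hh) hm
    | some a => exact ⟨a, rfl⟩
  have hval : minW w l = a := by simp [minW, ha]
  have hmem : a ∈ l.map w := List.min?_mem ha
  obtain ⟨f, hf, hfa⟩ := List.mem_map.1 hmem
  have hle : ∀ b ∈ l.map w, a ≤ b :=
    (List.le_min?_iff ha).1 le_rfl
  refine ⟨⟨f, hf, by rw [hval, hfa]⟩, fun g hg => ?_⟩
  rw [hval]
  exact hle _ (List.mem_map.2 ⟨g, hg, rfl⟩)

lemma isWalk_cons (G : MultiDigraph V E) (a : E) (l : List E) (v u : V) :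
    G.IsWalk v u (a :: l) ↔ G.src a = v ∧ G.IsWalk (G.tgt a) u l := Iff.rfl

lemma isWalk_nil (G : MultiDigraph V E) (v u : V) :
    G.IsWalk v u ([] : List E) ↔ v = u := Iff.rfl

lemma isWalk_append (G : MultiDigraph V E) :
    ∀ (l1 : List E) (l2 : List E) (v u : V),
      G.IsWalk v u (l1 ++ l2) ↔ ∃ m, G.IsWalk v m l1 ∧ G.IsWalk m u l2 := by
  intro l1
  induction l1 with
  | nil => intro l2 v u; simp [isWalk_nil]
  | cons a l ih =>
      intro l2 v u
      rw [List.cons_append, isWalk_cons, ih]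
      constructor
      · rintro ⟨h1, m, h2, h3⟩; exact ⟨m, (isWalk_cons G a l v m).2 ⟨h1, h2⟩, h3⟩
      · rintro ⟨m, hm, h3⟩
        obtain ⟨h1, h2⟩ := (isWalk_cons G a l v m).1 hm
        exact ⟨h1, m, h2, h3⟩

lemma exists_boundary {P : ℕ → Prop} :
    ∀ (k : ℕ), P 0 → ¬ P k → ∃ i < k, P i ∧ ¬ P (i+1) := by
  intro k
  induction k with
  | zero => intro h0 hk; exact absurd h0 hk
  | succ n ih =>
      intro h0 hk
      by_cases h : P n
      · exact ⟨n, Nat.lt_succ_self n, h, hk⟩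
      · obtain ⟨i, hi, h1, h2⟩ := ih h0 h
        exact ⟨i, hi.trans (Nat.lt_succ_self n), h1, h2⟩

end MultiDigraph

open MultiDigraph in
/-- when the iterative process terminates (no cycle remains), the
recorded set of cycles `Ps i ++ [e]` contains one of minimum flow value among
all cycles of the original graph G (all of which pass through e). -/
theorem stmt_12 {V E : Type} [Fintype E] [DecidableEq E]
    (G : MultiDigraph V E) (w : E → ℝ) (e : E) (u v : V)
    (hsrc : G.src e = u) (htgt : G.tgt e = v)
    (hall : ∀ l, G.IsCycle l → e ∈ l)
    (k : ℕ) (Es : ℕ → Finset E) (Ps : ℕ → List E)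
    (hrun : G.ProcessRun w e u v k Es Ps)
    (hterm : ¬ G.HasCycleIn (Es k))
    (hcyc : ∃ C, G.IsCycle C) :
    ∃ i < k, ∀ C', G.IsCycle C' →
      flowVal w (Ps i ++ [e]) ≤ flowVal w C' := by
  classical
  obtain ⟨h0, hstep⟩ := hrun
  -- Es decreasing-ish facts: e stays forever
  have heEs : ∀ i ≤ k, e ∈ Es i := by
    intro i
    induction i with
    | zero => intro _; rw [h0]; exact Finset.mem_univ e
    | succ n ih =>
        intro hn
        have hn' : n < k := Nat.lt_of_succ_le hn
        have hset := (hstep n hn').2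
        have := Set.ext_iff.1 hset e
        simp only [Set.mem_setOf_eq, Finset.mem_coe] at this
        exact this.2 ⟨ih (le_of_lt hn'), by simp⟩
  -- choose a minimizing cycle C₀
  set S : Set ℝ := {x | ∃ C, G.IsCycle C ∧ flowVal w C = x} with hS
  have hSsub : S ⊆ Set.image2 (fun a b => a - b) (Set.range w) (Set.range w) := by
    rintro x ⟨C, hC, rfl⟩
    obtain ⟨⟨f, hf, hfval⟩, -⟩ := maxW_spec w hC.1
    obtain ⟨⟨g, hg, hgval⟩, -⟩ := minW_spec w hC.1
    exact ⟨w f, ⟨f, rfl⟩, w g, ⟨g, rfl⟩, by simp [flowVal, hfval, hgval]⟩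
  have hSfin : S.Finite :=
    Set.Finite.subset (Set.Finite.image2 _ (Set.finite_range w) (Set.finite_range w)) hSsub
  have hSne : S.Nonempty := by
    obtain ⟨C, hC⟩ := hcyc
    exact ⟨flowVal w C, C, hC, rfl⟩
  obtain ⟨x₀, ⟨C₀, hC₀, rfl⟩, hmin⟩ := Set.exists_min_image S id hSfin hSne
  -- find the step where C₀ loses an edge
  have hP0 : EdgesIn C₀ (Es 0) := by intro f _; rw [h0]; exact Finset.mem_univ f
  have hPk : ¬ EdgesIn C₀ (Es k) := fun h => hterm ⟨C₀, hC₀, h⟩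
  obtain ⟨i, hik, hPi, hPi1⟩ := exists_boundary (P := fun i => EdgesIn C₀ (Es i)) k hP0 hPk
  obtain ⟨hmaxflow, hset⟩ := hstep i hik
  -- the deleted edge
  have : ∃ f ∈ C₀, f ∉ Es (i+1) := by
    by_contra h
    push_neg at h
    exact hPi1 h
  obtain ⟨f, hfC, hfnot⟩ := this
  have hfEs : f ∈ Es i := hPi f hfC
  have hfdel : maxW w (Ps i) ≤ w f ∧ f ≠ e := by
    have := Set.ext_iff.1 hset f
    simp only [Set.mem_setOf_eq, Finset.mem_coe] at this
    by_contra h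
    exact hfnot (this.2 ⟨hfEs, h⟩)
  -- rotate C₀ around e to get a v-u walk Q
  have heC : e ∈ C₀ := hall C₀ hC₀
  obtain ⟨a, b, hab⟩ := List.append_of_mem heC
  obtain ⟨hCne, x, hwalk⟩ := hC₀
  rw [hab] at hwalk
  obtain ⟨m, hwa, hwe⟩ := (G.isWalk_append a (e :: b) x x).1 hwalk
  obtain ⟨hsrce, hwb⟩ := hwe
  have hmu : m = u := by rw [← hsrce, hsrc]
  rw [hmu] at hwa
  rw [htgt] at hwb
  set Q : List E := b ++ a with hQ
  have hwQ : G.IsWalk v u Q := (G.isWalk_append b a v u).2 ⟨x, hwb, hwa⟩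
  have hQsub : ∀ g ∈ Q, g ∈ C₀ := by
    intro g hg
    rw [hab]
    simp only [hQ, List.mem_append, List.mem_cons] at hg ⊢
    tauto
  have hQne : Q ≠ [] := by
    have : f ∈ Q := by
      have : f ∈ a ++ e :: b := by rw [← hab]; exact hfC
      simp only [List.mem_append, List.mem_cons] at this
      rcases this with h | h | h
      · simp [hQ, h]
      · exact absurd h hfdel.2
      · simp [hQ, h]
    exact List.ne_nil_of_mem this
  have hQEs : EdgesIn Q (Es i) := fun g hg => hPi g (hQsub g hg)
  obtain ⟨hwP, hPne, hPEs, hopt⟩ := hmaxflow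
  have hQP : minW w Q ≤ minW w (Ps i) := hopt Q hwQ hQne hQEs
  -- the comparisons
  refine ⟨i, hik, fun C' hC' => ?_⟩
  have hLne : Ps i ++ [e] ≠ [] := by simp
  have hmaxle : maxW w (Ps i ++ [e]) ≤ maxW w C₀ := by
    obtain ⟨⟨g, hg, hgval⟩, -⟩ := maxW_spec w hLne
    rw [hgval]
    rcases List.mem_append.1 hg with hg | hg
    · calc w g ≤ maxW w (Ps i) := (maxW_spec w hPne).2 g hg
        _ ≤ w f := hfdel.1
        _ ≤ maxW w C₀ := (maxW_spec w hCne).2 f hfC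
    · simp only [List.mem_singleton] at hg
      rw [hg]
      exact (maxW_spec w hCne).2 e heC
  have hminle : minW w C₀ ≤ minW w (Ps i ++ [e]) := by
    obtain ⟨⟨g, hg, hgval⟩, -⟩ := minW_spec w hLne
    rw [hgval]
    rcases List.mem_append.1 hg with hg | hg
    · obtain ⟨⟨h, hh, hhval⟩, -⟩ := minW_spec w hQne
      calc minW w C₀ ≤ w h := (minW_spec w hCne).2 h (hQsub h hh)
        _ = minW w Q := hhval.symm
        _ ≤ minW w (Ps i) := hQP
        _ ≤ w g := (minW_spec w hPne).2 g hg
    · simp only [List.mem_singleton] at hg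
      rw [hg]
      exact (minW_spec w hCne).2 e heC
  have h1 : flowVal w (Ps i ++ [e]) ≤ flowVal w C₀ := by
    unfold flowVal
    linarith
  have h2 : flowVal w C₀ ≤ flowVal w C' := hmin (flowVal w C') ⟨C', hC', rfl⟩
  linarith
end
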